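/- Let α > 0, s > 0, ω > 0 with ω/s > √α, and let ℓ ∈ ℤ with ℓ ≠ 0. Then the quartic polynomial P(X) = X⁴ + α·X² − s·X + iωℓ ∈ ℂ[X] has no roots on the imaginary axis, and exactly two of its roots (counted with multiplicity) have positive real part, while the other two have negative real part. -/

import Mathlib

open Filter Topology Polynomial

theorem my_card_eq_four {α : Type*} {s : Multiset α} :
    Multiset.card s = 4 ↔ ∃ a b c d, s = {a, b, c, d} := by
  constructor
  · intro h
    obtain ⟨a, ha⟩ := Multiset.card_pos_iff_exists_mem.mp (by omega : 0 < Multiset.card s)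
    obtain ⟨t, rfl⟩ := Multiset.exists_cons_of_mem ha
    simp only [Multiset.card_cons] at h
    have h3 : Multiset.card t = 3 := by omega
    obtain ⟨b, c, d, rfl⟩ := Multiset.card_eq_three.mp h3
    exact ⟨a, b, c, d, rfl⟩
  · rintro ⟨a, b, c, d, rfl⟩; rfl

theorem exists_quad_fac (a b d : ℂ) : ∃ z : Fin 4 → ℂ, ∀ w : ℂ,
    w^4 + a*w^2 + b*w + d = (w - z 0)*(w - z 1)*(w - z 2)*(w - z 3) := by
  set p : ℂ[X] := X^4 + C a * X^2 + C b * X + C d with hp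
  have hmon : p.Monic := by rw [hp]; monicity!
  have hdeg : p.natDegree = 4 := by rw [hp]; compute_degree!
  have hsp : p.roots.card = 4 := by
    rw [← hdeg, ← Polynomial.splits_iff_card_roots]
    exact IsAlgClosed.splits p
  obtain ⟨z1, z2, z3, z4, hr⟩ := my_card_eq_four.mp hsp
  have hfac := (IsAlgClosed.splits p).eq_prod_roots_of_monic hmon
  refine ⟨![z1, z2, z3, z4], fun w => ?_⟩
  have := congrArg (Polynomial.eval w) hfac
  simp only [hr] at this
  simp [hp, Polynomial.eval_multiset_prod, Multiset.map_cons, Multiset.prod_cons] at this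
  simp only [Matrix.cons_val_zero, Matrix.cons_val_one, Matrix.head_cons,
    Matrix.cons_val_two, Matrix.tail_cons, Matrix.cons_val_three]
  rw [this]; ring

theorem quad_multiset_eq (z z' : Fin 4 → ℂ)
    (h : ∀ w : ℂ, (w - z 0)*(w - z 1)*(w - z 2)*(w - z 3)
        = (w - z' 0)*(w - z' 1)*(w - z' 2)*(w - z' 3)) :
    ({z 0, z 1, z 2, z 3} : Multiset ℂ) = {z' 0, z' 1, z' 2, z' 3} := by
  have key : ∀ y : Fin 4 → ℂ,
      ((({y 0, y 1, y 2, y 3} : Multiset ℂ)).map (fun a => (X : ℂ[X]) - C a)).prod.roots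
        = ({y 0, y 1, y 2, y 3} : Multiset ℂ) := fun y =>
    Polynomial.roots_multiset_prod_X_sub_C _
  have hpq : ((({z 0, z 1, z 2, z 3} : Multiset ℂ)).map (fun a => (X : ℂ[X]) - C a)).prod
      = ((({z' 0, z' 1, z' 2, z' 3} : Multiset ℂ)).map (fun a => (X : ℂ[X]) - C a)).prod := by
    apply Polynomial.funext
    intro w
    simp only [Multiset.insert_eq_cons, Multiset.map_cons, Multiset.prod_cons,
      Multiset.map_singleton, Multiset.prod_singleton, Polynomial.eval_mul,
      Polynomial.eval_sub, Polynomial.eval_X, Polynomial.eval_C]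
    have := h w
    ring_nf
    ring_nf at this
    linear_combination this
  rw [← key z, ← key z', hpq]

theorem noaxis (α s ω : ℝ) (hα : 0 < α) (hs : 0 < s) (hω : 0 < ω)
    (hk : Real.sqrt α < ω / s) (ℓ : ℤ) (hℓ : ℓ ≠ 0) (t : ℝ) (ht0 : 0 ≤ t) (ht1 : t ≤ 1)
    (z : ℂ) (hz : z^4 + (α:ℂ)*z^2 + ((-(t*s) : ℝ):ℂ)*z + Complex.I*(ω:ℂ)*(ℓ:ℂ) = 0) :
    z.re ≠ 0 := by
  intro h0
  set y := z.im with hy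
  have hzy : z = (y:ℂ)*Complex.I := by
    apply Complex.ext <;> simp [h0, hy]
  rw [hzy] at hz
  have hz' : ((y^4 - α*y^2 : ℝ) : ℂ) + ((ω*ℓ - t*s*y : ℝ):ℂ) * Complex.I = 0 := by
    push_cast
    push_cast at hz
    linear_combination hz + ((y:ℂ)^4*(1 - Complex.I^2) - (α:ℂ)*(y:ℂ)^2) * Complex.I_sq
  rw [Complex.ext_iff] at hz'
  obtain ⟨hA, hB⟩ := hz'
  simp only [Complex.add_re, Complex.add_im, Complex.sub_re, Complex.sub_im,
    ← Complex.ofReal_pow, Complex.ofReal_re, Complex.ofReal_im, Complex.mul_re,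
    Complex.mul_im, Complex.I_re, Complex.I_im, Complex.zero_re, Complex.zero_im,
    mul_zero, mul_one, zero_mul, sub_zero, zero_sub, zero_add, add_zero, neg_zero] at hA hB
  have hyne : y ≠ 0 := by
    intro h
    rw [h] at hB
    have : (ℓ:ℝ) = 0 := by nlinarith
    exact hℓ (by exact_mod_cast this)
  have hA' : y^2 = α := by
    have hy2 : 0 < y^2 := by positivity
    nlinarith [hA]
  have hB' : t*s*y = ω*ℓ := by linarith
  have hsα : s^2*α < ω^2 := by
    have h1 : Real.sqrt α * s < ω := (lt_div_iff₀ hs).mp hk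
    have h2 : (Real.sqrt α * s)^2 < ω^2 := by
      have := pow_lt_pow_left₀ h1 (by positivity : (0:ℝ) ≤ Real.sqrt α * s) (two_ne_zero)
      exact this
    have h5 : (Real.sqrt α)^2 = α := Real.sq_sqrt hα.le
    nlinarith [h2, h5]
  have hl1 : (1:ℝ) ≤ (ℓ:ℝ)^2 := by
    have : 1 ≤ ℓ^2 := by
      rcases lt_or_gt_of_ne hℓ with h|h <;> nlinarith
    exact_mod_cast this
  have key : t^2*s^2*α = ω^2*(ℓ:ℝ)^2 := by
    have h2 : (t*s*y)^2 = (ω*(ℓ:ℝ))^2 := by rw [hB']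
    nlinarith [h2, hA']
  have h3 : ω^2 ≤ ω^2*(ℓ:ℝ)^2 := by nlinarith [sq_nonneg ω]
  have ht2 : t^2 ≤ 1 := by nlinarith
  have hsa : (0:ℝ) ≤ s^2*α := by positivity
  have h4 : t^2*s^2*α ≤ s^2*α := by
    calc t^2*s^2*α = t^2*(s^2*α) := by ring
    _ ≤ 1*(s^2*α) := mul_le_mul_of_nonneg_right ht2 hsa
    _ = s^2*α := one_mul _
  linarith

theorem root_bound (a b d z : ℂ) (hz : z^4 + a*z^2 + b*z + d = 0) :
    ‖z‖ ≤ 1 + ‖a‖ + ‖b‖ + ‖d‖ := by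
  by_contra hB
  push_neg at hB
  set r := ‖z‖ with hr
  have hr1 : 1 ≤ r := by
    have := norm_nonneg a; have := norm_nonneg b; have := norm_nonneg d
    linarith
  have heq : z^4 = -(a*z^2) - b*z - d := by linear_combination hz
  have hnorm : r^4 ≤ ‖a‖*r^2 + ‖b‖*r + ‖d‖ := by
    calc r^4 = ‖z^4‖ := by rw [hr, norm_pow]
    _ = ‖-(a*z^2) - b*z - d‖ := by rw [heq]
    _ ≤ ‖-(a*z^2) - b*z‖ + ‖d‖ := norm_sub_le _ _
    _ ≤ ‖-(a*z^2)‖ + ‖b*z‖ + ‖d‖ := by linarith [norm_sub_le (-(a*z^2)) (b*z)]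
    _ = ‖a‖*r^2 + ‖b‖*r + ‖d‖ := by rw [norm_neg, norm_mul, norm_mul, norm_pow]
  have hr0 : (0:ℝ) ≤ r := by linarith
  have hrr : r ≤ r^2 := by nlinarith [mul_nonneg (sub_nonneg.mpr hr1) hr0]
  have hrr2 : (1:ℝ) ≤ r^2 := by nlinarith
  have h2 : ‖b‖*r ≤ ‖b‖*r^2 := mul_le_mul_of_nonneg_left hrr (norm_nonneg b)
  have h3 : ‖d‖ ≤ ‖d‖*r^2 := by nlinarith [norm_nonneg d]
  have h4 : r^4 ≤ (‖a‖+‖b‖+‖d‖)*r^2 := by nlinarith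
  have h5 : (‖a‖+‖b‖+‖d‖)*r^2 ≤ (r-1)*r^2 :=
    mul_le_mul_of_nonneg_right (by linarith) (sq_nonneg r)
  have h6 : (0:ℝ) ≤ (r-1)*r^3 := mul_nonneg (by linarith) (by positivity)
  nlinarith [h4, h5, h6, hrr2]

noncomputable def qcount (z : Fin 4 → ℂ) : ℕ :=
  Multiset.card (Multiset.filter (fun x => 0 < x.re) {z 0, z 1, z 2, z 3})

theorem qcount_eq (z : Fin 4 → ℂ) :
    qcount z = (if 0 < (z 0).re then 1 else 0) + (if 0 < (z 1).re then 1 else 0)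
      + (if 0 < (z 2).re then 1 else 0) + (if 0 < (z 3).re then 1 else 0) := by
  simp only [qcount, Multiset.insert_eq_cons, Multiset.filter_cons, Multiset.filter_singleton,
    Multiset.card_add, apply_ite Multiset.card, Multiset.card_singleton, Multiset.card_zero,
    Multiset.card_cons]
  split_ifs <;> simp

theorem base_fac (α : ℝ) (D : ℂ) : ∃ w1 w2 : ℂ,
    ∀ w : ℂ, w^4 + (α:ℂ)*w^2 + D = (w - w1)*(w - (-w1))*(w - w2)*(w - (-w2)) := by
  obtain ⟨d, hd⟩ := IsAlgClosed.exists_pow_nat_eq ((α:ℂ)^2 - 4*D) (zero_lt_two)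
  obtain ⟨w1, hw1⟩ := IsAlgClosed.exists_pow_nat_eq ((-(α:ℂ) + d)/2) (zero_lt_two)
  obtain ⟨w2, hw2⟩ := IsAlgClosed.exists_pow_nat_eq ((-(α:ℂ) - d)/2) (zero_lt_two)
  refine ⟨w1, w2, fun w => ?_⟩
  calc w^4 + (α:ℂ)*w^2 + D
      = (w^2 - (-(α:ℂ) + d)/2) * (w^2 - (-(α:ℂ) - d)/2) := by linear_combination ((1:ℂ)/4) * hd
    _ = (w^2 - w1^2)*(w^2 - w2^2) := by rw [hw1, hw2]
    _ = (w - w1)*(w - (-w1))*(w - w2)*(w - (-w2)) := by ring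

theorem count_pm (w1 w2 : ℂ) (h1 : w1.re ≠ 0) (h2 : w2.re ≠ 0) :
    Multiset.card (Multiset.filter (fun x => 0 < x.re) ({w1, -w1, w2, -w2} : Multiset ℂ)) = 2 := by
  simp only [Multiset.insert_eq_cons, Multiset.filter_cons, Multiset.filter_singleton,
    Multiset.card_add, apply_ite Multiset.card, Multiset.card_singleton, Multiset.card_zero,
    Multiset.card_cons, Complex.neg_re, neg_pos]
  rcases lt_or_gt_of_ne h1 with h|h <;> rcases lt_or_gt_of_ne h2 with h'|h' <;>
    simp [h, h', asymm h, asymm h', not_lt_of_gt]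

/-- For α > 0, s, ω > 0 with ω/s > √α and ℓ ≠ 0, the quartic
X⁴ + αX² − sX + iωℓ has no purely imaginary roots: exactly two roots (with
multiplicity) have positive real part and two have negative real part. -/
theorem quartic_root_count (α s ω : ℝ) (hα : 0 < α) (hs : 0 < s) (hω : 0 < ω)
    (hk : Real.sqrt α < ω / s) (ℓ : ℤ) (hℓ : ℓ ≠ 0) :
    ∃ z₁ z₂ z₃ z₄ : ℂ,
      (∀ w : ℂ, w ^ 4 + (α : ℂ) * w ^ 2 - (s : ℂ) * w + Complex.I * (ω : ℂ) * (ℓ : ℂ) =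
        (w - z₁) * (w - z₂) * (w - z₃) * (w - z₄)) ∧
      0 < z₁.re ∧ 0 < z₂.re ∧ z₃.re < 0 ∧ z₄.re < 0 := by
  set D : ℂ := Complex.I * (ω : ℂ) * (ℓ : ℂ) with hD
  set T := Set.Icc (0:ℝ) 1 with hT
  haveI : PreconnectedSpace T := Subtype.preconnectedSpace isPreconnected_Icc
  have hZ : ∀ t : T, ∃ z : Fin 4 → ℂ, ∀ w : ℂ,
      w^4 + (α:ℂ)*w^2 + ((-(t.1*s) : ℝ):ℂ)*w + D = (w - z 0)*(w - z 1)*(w - z 2)*(w - z 3) :=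
    fun t => exists_quad_fac _ _ _
  choose Z HZ using hZ
  have Hroot : ∀ t : T, ∀ i : Fin 4,
      (Z t i)^4 + (α:ℂ)*(Z t i)^2 + ((-(t.1*s) : ℝ):ℂ)*(Z t i) + D = 0 := by
    intro t i
    rw [HZ t (Z t i)]
    fin_cases i <;> simp [sub_self]
  have Hre : ∀ t : T, ∀ i : Fin 4, (Z t i).re ≠ 0 := fun t i =>
    noaxis α s ω hα hs hω hk ℓ hℓ t.1 t.2.1 t.2.2 _ (Hroot t i)
  set B : ℝ := 1 + ‖(α:ℂ)‖ + s + ‖D‖ with hB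
  have HBnd : ∀ t : T, ∀ i : Fin 4, ‖Z t i‖ ≤ B := by
    intro t i
    have h1 := root_bound (α:ℂ) ((-(t.1*s) : ℝ):ℂ) D _ (Hroot t i)
    have h2 : ‖((-(t.1*s) : ℝ):ℂ)‖ ≤ s := by
      rw [Complex.norm_real, Real.norm_eq_abs, abs_neg, abs_of_nonneg
        (mul_nonneg t.2.1 hs.le)]
      nlinarith [t.2.1, t.2.2]
    rw [hB]; linarith
  set f : T → ℕ := fun t => qcount (Z t) with hf
  have hlc : IsLocallyConstant f := by
    rw [IsLocallyConstant.iff_eventually_eq]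
    intro t
    by_contra hcon
    rw [Filter.not_eventually] at hcon
    obtain ⟨u, hu, hne⟩ := Filter.exists_seq_forall_of_frequently hcon
    set v : ℕ → (Fin 4 → ℂ) := fun n => Z (u n) with hv
    have hB0 : (0:ℝ) ≤ B := by
      have := norm_nonneg ((α:ℂ)); have := norm_nonneg D; rw [hB]; linarith
    have hvS : ∀ n, v n ∈ Metric.closedBall (0 : Fin 4 → ℂ) B := by
      intro n
      rw [Metric.mem_closedBall, dist_zero_right]
      exact (pi_norm_le_iff_of_nonneg hB0).mpr (fun i => HBnd (u n) i)
    obtain ⟨zl, -, φ, hφ, hvz⟩ := tendsto_subseq_of_bounded Metric.isBounded_closedBall hvS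
    have hcomp : ∀ i, Tendsto (fun n => v (φ n) i) atTop (𝓝 (zl i)) := fun i =>
      tendsto_pi_nhds.mp hvz i
    have hreal : Tendsto (fun n => ((u (φ n) : ℝ))) atTop (𝓝 (t:ℝ)) :=
      ((continuous_subtype_val.tendsto t).comp (hu.comp hφ.tendsto_atTop))
    have hfac : ∀ w : ℂ, w^4 + (α:ℂ)*w^2 + ((-(t.1*s) : ℝ):ℂ)*w + D
        = (w - zl 0)*(w - zl 1)*(w - zl 2)*(w - zl 3) := by
      intro w
      have hcoef : Tendsto (fun n => ((-(((u (φ n)):ℝ)*s) : ℝ) : ℂ))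
          atTop (𝓝 (((-(t.1*s)) : ℝ) : ℂ)) :=
        (Complex.continuous_ofReal.tendsto _).comp ((hreal.mul tendsto_const_nhds).neg)
      have h1 : Tendsto (fun n => w^4 + (α:ℂ)*w^2 + ((-(((u (φ n)):ℝ)*s) : ℝ):ℂ)*w + D)
          atTop (𝓝 (w^4 + (α:ℂ)*w^2 + ((-(t.1*s) : ℝ):ℂ)*w + D)) :=
        (tendsto_const_nhds.add (hcoef.mul tendsto_const_nhds)).add tendsto_const_nhds
      have h2 : Tendsto (fun n => (w - v (φ n) 0)*(w - v (φ n) 1)*(w - v (φ n) 2)*(w - v (φ n) 3))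
          atTop (𝓝 ((w - zl 0)*(w - zl 1)*(w - zl 2)*(w - zl 3))) :=
        (((tendsto_const_nhds.sub (hcomp 0)).mul (tendsto_const_nhds.sub (hcomp 1))).mul
          (tendsto_const_nhds.sub (hcomp 2))).mul (tendsto_const_nhds.sub (hcomp 3))
      have h3 : (fun n => w^4 + (α:ℂ)*w^2 + ((-(((u (φ n)):ℝ)*s) : ℝ):ℂ)*w + D)
          = (fun n => (w - v (φ n) 0)*(w - v (φ n) 1)*(w - v (φ n) 2)*(w - v (φ n) 3)) := by
        funext n; exact HZ (u (φ n)) w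
      rw [h3] at h1
      exact tendsto_nhds_unique h1 h2
    have hmeq : ({Z t 0, Z t 1, Z t 2, Z t 3} : Multiset ℂ) = {zl 0, zl 1, zl 2, zl 3} :=
      quad_multiset_eq _ _ (fun w => by rw [← HZ t w, hfac w])
    have hftc : f t = qcount zl := by
      show qcount (Z t) = qcount zl
      unfold qcount
      rw [hmeq]
    have hrel : ∀ i : Fin 4, (zl i).re ≠ 0 := by
      intro i
      apply noaxis α s ω hα hs hω hk ℓ hℓ t.1 t.2.1 t.2.2
      rw [hfac (zl i)]
      fin_cases i <;> simp [sub_self]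
    have hsig : ∀ i : Fin 4, ∀ᶠ n in atTop, ((0:ℝ) < (v (φ n) i).re ↔ 0 < (zl i).re) := by
      intro i
      have hct : Tendsto (fun n => (v (φ n) i).re) atTop (𝓝 ((zl i).re)) :=
        (Complex.continuous_re.tendsto _).comp (hcomp i)
      rcases lt_or_gt_of_ne (hrel i) with h|h
      · exact (hct.eventually (eventually_lt_nhds h)).mono
          (fun n hn => iff_of_false (by linarith) (by linarith))
      · exact (hct.eventually (eventually_gt_nhds h)).mono
          (fun n hn => iff_of_true hn h)
    obtain ⟨n, h0, h1', h2', h3'⟩ :=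
      ((hsig 0).and ((hsig 1).and ((hsig 2).and (hsig 3)))).exists
    apply hne (φ n)
    have hfv : f (u (φ n)) = qcount (v (φ n)) := rfl
    rw [hfv, hftc, qcount_eq, qcount_eq]
    simp only [h0, h1', h2', h3']
  have hconst := hlc.apply_eq_of_preconnectedSpace
  have h01 : (0:ℝ) ∈ T := by rw [hT]; constructor <;> norm_num
  have h11 : (1:ℝ) ∈ T := by rw [hT]; constructor <;> norm_num
  set t0 : T := ⟨0, h01⟩ with ht0
  set t1 : T := ⟨1, h11⟩ with ht1
  -- f t0 = 2
  obtain ⟨w1, w2, hbf⟩ := base_fac α D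
  have hfac0 : ∀ w : ℂ, w^4 + (α:ℂ)*w^2 + ((-((t0:ℝ)*s) : ℝ):ℂ)*w + D
      = (w-w1)*(w-(-w1))*(w-w2)*(w-(-w2)) := by
    intro w
    have hc : ((-((t0:ℝ)*s) : ℝ):ℂ) = 0 := by
      have : ((t0:ℝ)) = 0 := rfl
      rw [this]; norm_num
    rw [hc, zero_mul, add_zero]
    exact hbf w
  have hw1r : w1.re ≠ 0 := by
    apply noaxis α s ω hα hs hω hk ℓ hℓ (t0:ℝ) t0.2.1 t0.2.2
    rw [hfac0 w1]; simp [sub_self]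
  have hw2r : w2.re ≠ 0 := by
    apply noaxis α s ω hα hs hω hk ℓ hℓ (t0:ℝ) t0.2.1 t0.2.2
    rw [hfac0 w2]; simp [sub_self]
  have hmeq0 : ({Z t0 0, Z t0 1, Z t0 2, Z t0 3} : Multiset ℂ) = {w1, -w1, w2, -w2} := by
    have := quad_multiset_eq (Z t0) ![w1, -w1, w2, -w2] (fun w => by
      simp only [Matrix.cons_val_zero, Matrix.cons_val_one, Matrix.head_cons,
        Matrix.cons_val_two, Matrix.tail_cons, Matrix.cons_val_three]
      rw [← HZ t0 w]
      exact hfac0 w)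
    simpa using this
  have hf0 : f t0 = 2 := by
    show qcount (Z t0) = 2
    unfold qcount
    rw [hmeq0]
    exact count_pm w1 w2 hw1r hw2r
  have hf1 : f t1 = 2 := by rw [hconst t1 t0, hf0]
  -- unpack f t1 = 2
  have hcount : (if 0 < (Z t1 0).re then 1 else 0) + (if 0 < (Z t1 1).re then 1 else 0)
      + (if 0 < (Z t1 2).re then 1 else 0) + (if 0 < (Z t1 3).re then 1 else 0) = 2 := by
    rw [← qcount_eq]; exact hf1
  have hpoly1 : ∀ w : ℂ, w ^ 4 + (α : ℂ) * w ^ 2 - (s : ℂ) * w + Complex.I * (ω : ℂ) * (ℓ : ℂ)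
      = (w - Z t1 0)*(w - Z t1 1)*(w - Z t1 2)*(w - Z t1 3) := by
    intro w
    have h := HZ t1 w
    have hv1 : ((t1:ℝ)) = 1 := rfl
    rw [hv1, hD] at h
    push_cast at h
    linear_combination h
  have hneg : ∀ i : Fin 4, ¬ 0 < (Z t1 i).re → (Z t1 i).re < 0 := fun i hi =>
    ((Hre t1 i).lt_or_gt).resolve_right hi
  by_cases h0 : 0 < (Z t1 0).re <;> by_cases h1 : 0 < (Z t1 1).re <;>
    by_cases h2 : 0 < (Z t1 2).re <;> by_cases h3 : 0 < (Z t1 3).re <;>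
    simp only [h0, h1, h2, h3, if_true, if_false, reduceIte] at hcount <;>
    first
    | omega
    | (exact ⟨Z t1 0, Z t1 1, Z t1 2, Z t1 3,
        fun w => hpoly1 w, h0, h1, hneg 2 h2, hneg 3 h3⟩)
    | (exact ⟨Z t1 0, Z t1 2, Z t1 1, Z t1 3,
        fun w => by rw [hpoly1 w]; ring, h0, h2, hneg 1 h1, hneg 3 h3⟩)
    | (exact ⟨Z t1 0, Z t1 3, Z t1 1, Z t1 2,
        fun w => by rw [hpoly1 w]; ring, h0, h3, hneg 1 h1, hneg 2 h2⟩)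
    | (exact ⟨Z t1 1, Z t1 2, Z t1 0, Z t1 3,
        fun w => by rw [hpoly1 w]; ring, h1, h2, hneg 0 h0, hneg 3 h3⟩)
    | (exact ⟨Z t1 1, Z t1 3, Z t1 0, Z t1 2,
        fun w => by rw [hpoly1 w]; ring, h1, h3, hneg 0 h0, hneg 2 h2⟩)
    | (exact ⟨Z t1 2, Z t1 3, Z t1 0, Z t1 1,
        fun w => by rw [hpoly1 w]; ring, h2, h3, hneg 0 h0, hneg 1 h1⟩)
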